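/- For every k ≥ 3 there exists a connected graph R on n = k²−1 vertices with minimum degree δ(R) = (n−k+1)/k and exactly k−1 cut edges. (Construction: a central block isomorphic to K_{k−1}, together with k−1 blocks each isomorphic to K_k, joined by a matching of k−1 cut edges matching each vertex of the central block to a distinct outer block.) -/

import Mathlib

open SimpleGraph

/-- Degree of a vertex. -/
noncomputable def vdeg {V : Type*} (G : SimpleGraph V) (v : V) : ℕ := (G.neighborSet v).ncard

/-- An edge-coloring `c` makes `G` conflict-free connected if any two distinct vertices are
joined by a path on which some color appears on exactly one edge. -/
def IsCFConnected {V : Type*} (G : SimpleGraph V) (c : Sym2 V → ℕ) : Prop :=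
  ∀ u v : V, u ≠ v → ∃ p : G.Walk u v, p.IsPath ∧
    ∃ col : ℕ, (p.edges.filter (fun e => c e = col)).length = 1

/-- The conflict-free connection number of `G`. -/
noncomputable def cfcNum {V : Type*} (G : SimpleGraph V) : ℕ :=
  sInf {k | ∃ c : Sym2 V → ℕ, (∀ e ∈ G.edgeSet, c e < k) ∧ IsCFConnected G c}

/-- The subgraph `C(G)` spanned by the cut edges (bridges) of `G`. -/
def bridgeGraph {V : Type*} (G : SimpleGraph V) : SimpleGraph V :=
  SimpleGraph.fromEdgeSet {e | G.IsBridge e}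

/-- A linear forest: an acyclic graph with maximum degree at most two. -/
def IsLinearForest {V : Type*} (H : SimpleGraph V) : Prop :=
  H.IsAcyclic ∧ ∀ v, (H.neighborSet v).ncard ≤ 2


abbrev Vtx (k : ℕ) := Option (Fin (2*k-2) ⊕ Fin (k-2) × Fin k)

def rgAdj (k : ℕ) : Vtx k → Vtx k → Prop
  | none, some (Sum.inl a) => a.val = 0
  | some (Sum.inl a), none => a.val = 0
  | none, some (Sum.inr p) => p.2.val = 0
  | some (Sum.inr p), none => p.2.val = 0
  | some (Sum.inl a), some (Sum.inl b) => a ≠ b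
  | some (Sum.inr p), some (Sum.inr q) => p.1 = q.1 ∧ p.2 ≠ q.2
  | _, _ => False

def RG (k : ℕ) : SimpleGraph (Vtx k) where
  Adj := rgAdj k
  symm := ⟨by rintro (_ | (a | ⟨i,a⟩)) (_ | (b | ⟨j,b⟩)) h <;> simp_all [rgAdj] <;> tauto⟩
  loopless := ⟨by rintro (_ | (a | ⟨i,a⟩)) h <;> simp_all [rgAdj]⟩

lemma RG_adj {k : ℕ} (u v : Vtx k) : (RG k).Adj u v ↔ rgAdj k u v := Iff.rfl

lemma exists_third {n : ℕ} (hn : 3 ≤ n) (a b : Fin n) : ∃ c, c ≠ a ∧ c ≠ b := by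
  refine ⟨⟨if a.val = 0 ∨ b.val = 0 then (if a.val = 1 ∨ b.val = 1 then 2 else 1) else 0,
    by split_ifs <;> omega⟩, ?_, ?_⟩ <;>
  · intro h
    have h2 := congrArg Fin.val h
    simp only at h2
    split_ifs at h2 <;> omega

lemma reach_inv {V : Type*} {H : SimpleGraph V} (P : V → Prop)
    (h : ∀ a b, H.Adj a b → (P a ↔ P b)) {u v : V} (hr : H.Reachable u v) : P u ↔ P v := by
  obtain ⟨p⟩ := hr
  induction p with
  | nil => exact Iff.rfl
  | cons h' _ ih => exact (h _ _ h').trans ih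

section
variable {k : ℕ} (hk : 3 ≤ k)

lemma rg_reach (hk : 3 ≤ k) (v : Vtx k) : (RG k).Reachable none v := by
  rcases v with _ | (a | ⟨i, a⟩)
  · exact Reachable.refl _
  · have h1 : (RG k).Adj none (some (Sum.inl ⟨0, by omega⟩)) := by
      rw [RG_adj]; simp [rgAdj]
    by_cases ha : a = ⟨0, by omega⟩
    · subst ha; exact h1.reachable
    · refine h1.reachable.trans (Adj.reachable ?_)
      rw [RG_adj]
      simpa [rgAdj] using fun h => ha h.symm
  · have h1 : (RG k).Adj none (some (Sum.inr (i, ⟨0, by omega⟩))) := by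
      rw [RG_adj]; simp [rgAdj]
    by_cases ha : a = ⟨0, by omega⟩
    · subst ha; exact h1.reachable
    · refine h1.reachable.trans (Adj.reachable ?_)
      rw [RG_adj]
      simpa [rgAdj] using fun h => ha h.symm

lemma rg_connected (hk : 3 ≤ k) : (RG k).Connected := by
  have : Nonempty (Vtx k) := ⟨none⟩
  exact ⟨fun u v => ((rg_reach hk u).symm.trans (rg_reach hk v))⟩

end

section
variable {k : ℕ}

lemma nbhd_none (hk : 3 ≤ k) : (RG k).neighborSet none =
    insert (some (Sum.inl ⟨0, by omega⟩))
      (Set.range (fun i : Fin (k-2) => (some (Sum.inr (i, ⟨0, by omega⟩)) : Vtx k))) := by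
  ext w
  rcases w with _ | (a | ⟨i, a⟩)
  · simp only [SimpleGraph.mem_neighborSet, RG_adj, rgAdj, Set.mem_insert_iff, Set.mem_range]
    simp
  · simp only [SimpleGraph.mem_neighborSet, RG_adj, rgAdj, Set.mem_insert_iff, Set.mem_range]
    simp [Fin.ext_iff, eq_comm]
  · simp only [SimpleGraph.mem_neighborSet, RG_adj, rgAdj, Set.mem_insert_iff, Set.mem_range]
    simp [Fin.ext_iff, eq_comm, Prod.ext_iff]

lemma vdeg_none (hk : 3 ≤ k) : vdeg (RG k) none = k - 1 := by
  rw [vdeg, nbhd_none hk]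
  rw [Set.ncard_insert_of_notMem (by simp) (Set.toFinite _), ← Set.image_univ,
    Set.ncard_image_of_injective _ (by intro i j h; simpa using h), Set.ncard_univ]
  simp only [Nat.card_eq_fintype_card, Fintype.card_fin]
  omega

lemma vdeg_ge (hk : 3 ≤ k) (v : Vtx k) : k - 1 ≤ vdeg (RG k) v := by
  rcases v with _ | (a | ⟨i, a⟩)
  · rw [vdeg_none hk]
  · have hsub : (fun b : Fin (2*k-2) => (some (Sum.inl b) : Vtx k)) '' {a}ᶜ ⊆
        (RG k).neighborSet (some (Sum.inl a)) := by
      rintro _ ⟨b, hb, rfl⟩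
      simp only [Set.mem_compl_iff, Set.mem_singleton_iff] at hb
      rw [SimpleGraph.mem_neighborSet, RG_adj]
      simp only [rgAdj, ne_eq]
      exact fun h => hb h.symm
    have h1 := Set.ncard_le_ncard hsub (Set.toFinite _)
    rw [Set.ncard_image_of_injective _ (by intro i j h; simpa using h)] at h1
    have h2 := Set.ncard_add_ncard_compl ({a} : Set (Fin (2*k-2)))
    simp only [Set.ncard_singleton, Nat.card_eq_fintype_card, Fintype.card_fin] at h2
    rw [vdeg]
    omega
  · have hsub : (fun b : Fin k => (some (Sum.inr (i, b)) : Vtx k)) '' {a}ᶜ ⊆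
        (RG k).neighborSet (some (Sum.inr (i, a))) := by
      rintro _ ⟨b, hb, rfl⟩
      simp only [Set.mem_compl_iff, Set.mem_singleton_iff] at hb
      rw [SimpleGraph.mem_neighborSet, RG_adj]
      simp only [rgAdj, ne_eq]
      exact ⟨by trivial, fun h => hb h.symm⟩
    have h1 := Set.ncard_le_ncard hsub (Set.toFinite _)
    rw [Set.ncard_image_of_injective _ (by intro i j h; simpa using h)] at h1
    have h2 := Set.ncard_add_ncard_compl ({a} : Set (Fin k))
    simp only [Set.ncard_singleton, Nat.card_eq_fintype_card, Fintype.card_fin] at h2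
    rw [vdeg]
    omega

end

section
variable {k : ℕ}

/-- The claimed set of bridges. -/
def BSet (k : ℕ) (hk : 3 ≤ k) : Set (Sym2 (Vtx k)) :=
  insert s((none : Vtx k), some (Sum.inl ⟨0, by omega⟩))
    (Set.range (fun i : Fin (k-2) => s((none : Vtx k), some (Sum.inr (i, ⟨0, by omega⟩)))))

lemma bridge_mem_e0 (hk : 3 ≤ k) :
    (RG k).IsBridge s((none : Vtx k), some (Sum.inl ⟨0, by omega⟩)) := by
  rw [isBridge_iff]
  intro hr
  have key : ∀ x y : Vtx k,
      (RG k \ fromEdgeSet {s((none : Vtx k), some (Sum.inl ⟨0, by omega⟩))}).Adj x y →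
      ((∃ a, x = some (Sum.inl a)) ↔ (∃ a, y = some (Sum.inl a))) := by
    rintro (_|(a|⟨i,a⟩)) (_|(b|⟨j,b⟩)) ⟨h1, h2⟩ <;>
      simp only [RG_adj, rgAdj] at h1 <;>
      simp_all [Sym2.eq_iff, Fin.ext_iff]
  have := reach_inv _ key hr
  simp at this

lemma bridge_mem_ei (hk : 3 ≤ k) (i : Fin (k-2)) :
    (RG k).IsBridge s((none : Vtx k), some (Sum.inr (i, ⟨0, by omega⟩))) := by
  rw [isBridge_iff]
  intro hr
  have key : ∀ x y : Vtx k,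
      (RG k \ fromEdgeSet {s((none : Vtx k), some (Sum.inr (i, ⟨0, by omega⟩)))}).Adj x y →
      ((∃ a, x = some (Sum.inr (i, a))) ↔ (∃ a, y = some (Sum.inr (i, a)))) := by
    rintro (_|(a|⟨i',a⟩)) (_|(b|⟨j',b⟩)) ⟨h1, h2⟩ <;>
      simp only [RG_adj, rgAdj] at h1 <;>
      simp_all [Sym2.eq_iff, Fin.ext_iff, Prod.ext_iff]
  have := reach_inv _ key hr
  simp at this

end

section
variable {k : ℕ}

lemma not_bridge_inl (hk : 3 ≤ k) (a b : Fin (2*k-2)) (hab : a ≠ b) :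
    ¬ (RG k).IsBridge s((some (Sum.inl a) : Vtx k), some (Sum.inl b)) := by
  rw [isBridge_iff]
  intro hnr
  obtain ⟨c, hca, hcb⟩ := exists_third (n := 2*k-2) (by omega) a b
  apply hnr
  have h1 : (RG k \ fromEdgeSet {s((some (Sum.inl a) : Vtx k), some (Sum.inl b))}).Adj
      (some (Sum.inl a)) (some (Sum.inl c)) := by
    refine ⟨by rw [RG_adj]; simpa [rgAdj] using fun h => hca h.symm, ?_⟩
    simp [Sym2.eq_iff]
    rintro (rfl | ⟨rfl, rfl⟩) <;> simp_all
  have h2 : (RG k \ fromEdgeSet {s((some (Sum.inl a) : Vtx k), some (Sum.inl b))}).Adj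
      (some (Sum.inl c)) (some (Sum.inl b)) := by
    refine ⟨by rw [RG_adj]; simpa [rgAdj] using hcb, ?_⟩
    simp [Sym2.eq_iff]
    rintro (rfl | ⟨rfl, rfl⟩) <;> simp_all
  exact h1.reachable.trans h2.reachable

lemma not_bridge_inr (hk : 3 ≤ k) (i : Fin (k-2)) (a b : Fin k) (hab : a ≠ b) :
    ¬ (RG k).IsBridge s((some (Sum.inr (i, a)) : Vtx k), some (Sum.inr (i, b))) := by
  rw [isBridge_iff]
  intro hnr
  obtain ⟨c, hca, hcb⟩ := exists_third (n := k) (by omega) a b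
  apply hnr
  have h1 : (RG k \ fromEdgeSet {s((some (Sum.inr (i, a)) : Vtx k), some (Sum.inr (i, b)))}).Adj
      (some (Sum.inr (i, a))) (some (Sum.inr (i, c))) := by
    refine ⟨by rw [RG_adj]; exact ⟨rfl, fun h => hca h.symm⟩, ?_⟩
    simp [Sym2.eq_iff, Prod.ext_iff]
    rintro (rfl | ⟨rfl, rfl⟩) <;> simp_all
  have h2 : (RG k \ fromEdgeSet {s((some (Sum.inr (i, a)) : Vtx k), some (Sum.inr (i, b)))}).Adj
      (some (Sum.inr (i, c))) (some (Sum.inr (i, b))) := by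
    refine ⟨by rw [RG_adj]; exact ⟨rfl, hcb⟩, ?_⟩
    simp [Sym2.eq_iff, Prod.ext_iff]
    rintro (rfl | ⟨rfl, rfl⟩) <;> simp_all
  exact h1.reachable.trans h2.reachable

end

lemma bridge_set_eq {k : ℕ} (hk : 3 ≤ k) :
    {e : Sym2 (Vtx k) | (RG k).IsBridge e} = BSet k hk := by
  ext e
  induction e using Sym2.ind with
  | _ u v =>
    simp only [Set.mem_setOf_eq, BSet, Set.mem_insert_iff, Set.mem_range]
    constructor
    · intro hb
      have hadj : (RG k).Adj u v := (IsBridge.reachable_iff_adj hb).1 ((rg_connected hk).preconnected u v)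
      rcases u with _|(a|⟨i,a⟩) <;> rcases v with _|(b|⟨j,b⟩) <;>
          rw [RG_adj] at hadj <;> simp only [rgAdj] at hadj
      · left
        have : b = ⟨0, by omega⟩ := Fin.ext hadj
        rw [this]
      · right
        exact ⟨j, by rw [show b = ⟨0, by omega⟩ from Fin.ext hadj]⟩
      · left
        rw [Sym2.eq_swap]
        have : a = ⟨0, by omega⟩ := Fin.ext hadj
        rw [this]
      · exact absurd hb (not_bridge_inl hk a b hadj)
      · right
        refine ⟨i, ?_⟩
        rw [Sym2.eq_swap]
        rw [show a = ⟨0, by omega⟩ from Fin.ext hadj]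
      · obtain ⟨rfl, hab⟩ := hadj
        exact absurd hb (not_bridge_inr hk i a b hab)
    · rintro (he | ⟨i, he⟩)
      · rw [he]; exact bridge_mem_e0 hk
      · rw [← he]; exact bridge_mem_ei hk i

lemma bridge_count {k : ℕ} (hk : 3 ≤ k) :
    {e : Sym2 (Vtx k) | (RG k).IsBridge e}.ncard = k - 1 := by
  rw [bridge_set_eq hk, BSet]
  rw [Set.ncard_insert_of_notMem (by simp [Sym2.eq_iff]) (Set.toFinite _), ← Set.image_univ,
    Set.ncard_image_of_injective _ (by
      intro i j h
      simp only [Sym2.eq_iff] at h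
      rcases h with ⟨-, h⟩ | ⟨h, -⟩ <;> simp_all), Set.ncard_univ]
  simp only [Nat.card_eq_fintype_card, Fintype.card_fin]
  omega

lemma card_vtx {k : ℕ} (hk : 3 ≤ k) : Fintype.card (Vtx k) = k ^ 2 - 1 := by
  simp only [Vtx, Fintype.card_option, Fintype.card_sum, Fintype.card_prod, Fintype.card_fin]
  obtain ⟨m, rfl⟩ : ∃ m, k = m + 3 := ⟨k - 3, by omega⟩
  have h1 : (m + 3) ^ 2 = m * m + 6 * m + 9 := by ring
  have h2 : (m + 3 - 2) * (m + 3) = m * m + 4 * m + 3 := by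
    rw [show m + 3 - 2 = m + 1 from rfl]; ring
  omega

theorem stmt_2 (k : ℕ) (hk : 3 ≤ k) :
    ∃ (V : Type) (_ : Fintype V) (R : SimpleGraph V),
      Fintype.card V = k ^ 2 - 1 ∧ R.Connected ∧
      (∀ v, k - 1 ≤ vdeg R v) ∧ (∃ v, vdeg R v = k - 1) ∧
      {e : Sym2 V | R.IsBridge e}.ncard = k - 1 :=
  ⟨Vtx k, inferInstance, RG k, card_vtx hk, rg_connected hk, vdeg_ge hk,
    ⟨none, vdeg_none hk⟩, bridge_count hk⟩
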